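/- Let α > 1 and r ≥ 2, let G be an r-uniform hypergraph on n ≥ r+1 vertices with principal eigenvector x (nonnegative, ∑ x_v^α = 1, P_G(x) = λ^{(α)}(G)), and let k be a vertex with x_k minimal. Let G − k be the hypergraph obtained by deleting k and all edges containing it, and let x' be x restricted to the remaining vertices. Then P_{G−k}(x') = λ^{(α)}(G)·(1 − r·x_k^α), and consequently λ^{(α)}(G−k) ≥ λ^{(α)}(G) · (1 − r·x_k^α)/(1 − x_k^α)^{r/α}. -/

import Mathlib

open Finset in
/-- Boundedness of the spectral objective over the unit α-sphere (with an
arbitrary extra constraint `Q`). -/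
lemma deletion_bdd_aux {V : Type*} [Fintype V] (r : ℕ) (α : ℝ) (hα : 0 < α)
    (H : Finset (Finset V)) :
    BddAbove {p : ℝ | ∃ y : V → ℝ, ∑ v, |y v| ^ α = 1 ∧
      p = (r.factorial : ℝ) * ∑ e ∈ H, ∏ v ∈ e, y v} := by
  refine ⟨(r.factorial : ℝ) * H.card, ?_⟩
  rintro p ⟨y, hnorm, rfl⟩
  have hy : ∀ v, |y v| ≤ 1 := by
    intro v
    by_contra hlt
    push_neg at hlt
    have h1 : (1:ℝ) < |y v| ^ α :=
      (Real.one_lt_rpow_iff_of_pos (lt_trans one_pos hlt)).2 (Or.inl ⟨hlt, hα⟩)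
    have h2 : |y v| ^ α ≤ 1 := by
      rw [← hnorm]
      exact Finset.single_le_sum (fun w _ => Real.rpow_nonneg (abs_nonneg _) α)
        (Finset.mem_univ v)
    linarith
  have hprod : ∀ e ∈ H, ∏ v ∈ e, y v ≤ 1 := by
    intro e _
    calc ∏ v ∈ e, y v ≤ |∏ v ∈ e, y v| := le_abs_self _
      _ = ∏ v ∈ e, |y v| := Finset.abs_prod e y
      _ ≤ 1 := Finset.prod_le_one (fun v _ => abs_nonneg _) (fun v _ => hy v)
  have := Finset.sum_le_card_nsmul H _ 1 hprod
  simp only [nsmul_eq_mul, mul_one] at this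
  have hfac : (0:ℝ) ≤ (r.factorial : ℝ) := Nat.cast_nonneg _
  calc (r.factorial : ℝ) * ∑ e ∈ H, ∏ v ∈ e, y v
      ≤ (r.factorial : ℝ) * H.card := mul_le_mul_of_nonneg_left this hfac

/-- Vertex-deletion identity and inequality for the α-spectral radius: if x is a
principal eigenvector of the r-uniform hypergraph G on n ≥ r+1 vertices, and k has
minimal component, then P_{G−k}(x') = λ·(1 − r·x_k^α) and
λ^{(α)}(G−k) ≥ λ·(1 − r·x_k^α)/(1 − x_k^α)^{r/α}. -/
theorem deletion_inequality {V : Type*} [Fintype V] [DecidableEq V] (r n : ℕ)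
    (hr : 2 ≤ r) (hn : Fintype.card V = n) (hnr : r + 1 ≤ n) (α : ℝ) (hα : 1 < α)
    (G : Finset (Finset V)) (hG : ∀ e ∈ G, e.card = r)
    (x : V → ℝ) (hx : ∀ v, 0 ≤ x v) (hsum : ∑ v, x v ^ α = 1)
    (lam : ℝ)
    (hlam : lam = sSup {p : ℝ | ∃ y : V → ℝ, ∑ v, |y v| ^ α = 1 ∧
      p = (r.factorial : ℝ) * ∑ e ∈ G, ∏ v ∈ e, y v})
    (hxlam : (r.factorial : ℝ) * ∑ e ∈ G, ∏ v ∈ e, x v = lam)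
    (k : V) (hk : ∀ v, x k ≤ x v) :
    (r.factorial : ℝ) * ∑ e ∈ G.filter (fun e => k ∉ e), ∏ v ∈ e, x v
        = lam * (1 - (r : ℝ) * x k ^ α) ∧
    lam * (1 - (r : ℝ) * x k ^ α) / (1 - x k ^ α) ^ ((r : ℝ) / α) ≤
      sSup {p : ℝ | ∃ y : V → ℝ, y k = 0 ∧ ∑ v, |y v| ^ α = 1 ∧
        p = (r.factorial : ℝ) * ∑ e ∈ G.filter (fun e => k ∉ e), ∏ v ∈ e, y v} := by
  have hα0 : (0:ℝ) < α := lt_trans one_pos hα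
  have hα0' : α ≠ 0 := ne_of_gt hα0
  set u : ℝ := x k with hu_def
  have hu0 : 0 ≤ u := hx k
  -- u^α < 1
  have hn3 : 3 ≤ n := le_trans (by omega) hnr
  have huα1 : u ^ α < 1 := by
    have hle : ∀ v ∈ Finset.univ (α := V), u ^ α ≤ x v ^ α :=
      fun v _ => Real.rpow_le_rpow hu0 (hk v) (le_of_lt hα0)
    have := Finset.card_nsmul_le_sum Finset.univ (fun v => x v ^ α) (u ^ α) hle
    rw [hsum, Finset.card_univ, hn] at this
    have hnn : (0:ℝ) ≤ u ^ α := Real.rpow_nonneg hu0 _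
    rcases hnn.eq_or_lt with h | h
    · rw [← h]; norm_num
    · have h3 : (3:ℝ) ≤ (n:ℕ) := by exact_mod_cast hn3
      rw [nsmul_eq_mul] at this
      nlinarith
  set s : ℝ := 1 - u ^ α with hs_def
  have hs : 0 < s := by simp only [hs_def]; linarith
  -- split lam
  set A : ℝ := ∑ e ∈ G.filter (fun e => k ∈ e), ∏ v ∈ e.erase k, x v with hA_def
  set B : ℝ := ∑ e ∈ G.filter (fun e => k ∉ e), ∏ v ∈ e, x v with hB_def
  set a : ℝ := (r.factorial : ℝ) * A with ha_def
  set b : ℝ := (r.factorial : ℝ) * B with hb_def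
  have hsplit : lam = u * a + b := by
    rw [← hxlam, ← Finset.sum_filter_add_sum_filter_not G (fun e => k ∈ e)]
    have h1 : ∑ e ∈ G.filter (fun e => k ∈ e), ∏ v ∈ e, x v = u * A := by
      rw [hA_def, Finset.mul_sum]
      refine Finset.sum_congr rfl ?_
      intro e he
      rw [← Finset.mul_prod_erase e x (Finset.mem_filter.1 he).2]
    rw [mul_add, h1, ha_def, hb_def, hB_def]
    ring
  -- key identity from the eigen-equation / perturbation
  have hsum' : ∑ v ∈ Finset.univ.erase k, x v ^ α = s := by
    have h0 := Finset.add_sum_erase Finset.univ (fun v => x v ^ α) (Finset.mem_univ k)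
    rw [hsum] at h0
    rw [hs_def]
    linarith
  have hbdd : BddAbove {p : ℝ | ∃ y : V → ℝ, ∑ v, |y v| ^ α = 1 ∧
      p = (r.factorial : ℝ) * ∑ e ∈ G, ∏ v ∈ e, y v} := deletion_bdd_aux r α hα0 G
  have hkey : b = lam * (1 - (r:ℝ) * u ^ α) := by
    rcases hu0.eq_or_lt with hu | hu
    · -- x k = 0 : trivial case
      rw [← hu, Real.zero_rpow hα0']
      rw [hsplit, ← hu]
      ring
    · -- x k > 0 : perturbation argument
      have hu1 : u < 1 := by
        by_contra hcon
        push_neg at hcon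
        have := Real.rpow_le_rpow zero_le_one hcon (le_of_lt hα0)
        rw [Real.one_rpow] at this
        linarith
      set c : ℝ → ℝ := fun t => ((1 - t ^ α) / s) ^ α⁻¹ with hc_def
      have hcu : c u = 1 := by
        simp only [hc_def, ← hs_def, div_self hs.ne', Real.one_rpow]
      set f : ℝ → ℝ := fun t => a * t * c t ^ (r-1) + b * c t ^ r with hf_def
      have hfu : f u = lam := by
        simp only [hf_def, hcu, one_pow, hsplit]
        ring
      -- f t ≤ lam on (0,1)
      have hmax : ∀ t ∈ Set.Ioo (0:ℝ) 1, f t ≤ lam := by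
        rintro t ⟨ht0, ht1⟩
        have hq : 0 < 1 - t ^ α := by
          have := Real.rpow_lt_one (le_of_lt ht0) ht1 hα0
          linarith
        have hc0 : 0 < c t := Real.rpow_pos_of_pos (div_pos hq hs) _
        set y : V → ℝ := fun v => if v = k then t else c t * x v with hy_def
        have hyk : y k = t := by simp [hy_def]
        have hyv : ∀ v, v ≠ k → y v = c t * x v := by
          intro v hv; simp [hy_def, hv]
        have hnorm : ∑ v, |y v| ^ α = 1 := by
          rw [← Finset.add_sum_erase Finset.univ (fun v => |y v| ^ α) (Finset.mem_univ k)]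
          have h1 : |y k| ^ α = t ^ α := by
            rw [hyk, abs_of_nonneg (le_of_lt ht0)]
          have h2 : ∀ v ∈ Finset.univ.erase k, |y v| ^ α = ((1 - t ^ α) / s) * x v ^ α := by
            intro v hv
            rw [hyv v (Finset.mem_erase.1 hv).1, abs_mul, abs_of_nonneg (le_of_lt hc0),
              abs_of_nonneg (hx v), Real.mul_rpow (le_of_lt hc0) (hx v)]
            congr 1
            simp only [hc_def]
            exact Real.rpow_inv_rpow (div_nonneg hq.le hs.le) hα0'
          rw [h1, Finset.sum_congr rfl h2, ← Finset.mul_sum, hsum']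
          field_simp
          ring
        have hval : (r.factorial : ℝ) * ∑ e ∈ G, ∏ v ∈ e, y v = f t := by
          rw [← Finset.sum_filter_add_sum_filter_not G (fun e => k ∈ e)]
          have e1 : ∀ e ∈ G.filter (fun e => k ∈ e),
              ∏ v ∈ e, y v = t * c t ^ (r-1) * ∏ v ∈ e.erase k, x v := by
            intro e he
            obtain ⟨heG, hek⟩ := Finset.mem_filter.1 he
            rw [← Finset.mul_prod_erase e y hek, hyk]
            have h3 : ∏ v ∈ e.erase k, y v = c t ^ (r-1) * ∏ v ∈ e.erase k, x v := by
              rw [Finset.prod_congr rfl (fun v hv => hyv v (Finset.mem_erase.1 hv).1),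
                Finset.prod_mul_distrib, Finset.prod_const,
                Finset.card_erase_of_mem hek, hG e heG]
            rw [h3]; ring
          have e2 : ∀ e ∈ G.filter (fun e => k ∉ e),
              ∏ v ∈ e, y v = c t ^ r * ∏ v ∈ e, x v := by
            intro e he
            obtain ⟨heG, hek⟩ := Finset.mem_filter.1 he
            have h3 : ∏ v ∈ e, y v = ∏ v ∈ e, (c t * x v) :=
              Finset.prod_congr rfl (fun v hv => hyv v (fun h => hek (h ▸ hv)))
            rw [h3, Finset.prod_mul_distrib, Finset.prod_const, hG e heG]
          rw [Finset.sum_congr rfl e1, Finset.sum_congr rfl e2, ← Finset.mul_sum,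
            ← Finset.mul_sum, ← hA_def, ← hB_def, hf_def]
          simp only [ha_def, hb_def]
          ring
        have hmem : f t ∈ {p : ℝ | ∃ y : V → ℝ, ∑ v, |y v| ^ α = 1 ∧
            p = (r.factorial : ℝ) * ∑ e ∈ G, ∏ v ∈ e, y v} := ⟨y, hnorm, hval.symm⟩
        rw [hlam]
        exact le_csSup hbdd hmem
      have hloc : IsLocalMax f u := by
        have hmem : Set.Ioo (0:ℝ) 1 ∈ nhds u := isOpen_Ioo.mem_nhds ⟨hu, hu1⟩
        filter_upwards [hmem] with t ht
        rw [hfu]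
        exact hmax t ht
      -- derivative of c at u
      have hone : (1 - u ^ α) / s = 1 := by rw [← hs_def]; exact div_self hs.ne'
      have hinner : HasDerivAt (fun t : ℝ => (1 - t ^ α) / s)
          (-(α * u ^ (α - 1)) / s) u :=
        ((Real.hasDerivAt_rpow_const (Or.inl hu.ne')).const_sub 1).div_const s
      have hcder : HasDerivAt c (-(u ^ (α - 1)) / s) u := by
        have := hinner.rpow_const (p := α⁻¹) (Or.inl (by rw [hone]; norm_num))
        simp only [hone, Real.one_rpow] at this
        convert this using 1
        field_simp
      have hfder : HasDerivAt f
          (a * c u ^ (r-1) + a * u * ((r-1 : ℕ) * c u ^ (r-1-1) * (-(u ^ (α - 1)) / s))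
            + b * ((r : ℕ) * c u ^ (r-1) * (-(u ^ (α - 1)) / s))) u := by
        have hd1 : HasDerivAt (fun t : ℝ => a * t) a u := by
          simpa using (hasDerivAt_id u).const_mul a
        have hd2 := hcder.pow (r-1)
        have hd3 := hd1.mul hd2
        have hd4 := (hcder.pow r).const_mul b
        exact hd3.add hd4
      have hzero := hloc.hasDerivAt_eq_zero hfder
      rw [hcu] at hzero
      simp only [one_pow] at hzero
      have hrc : ((r - 1 : ℕ) : ℝ) = (r : ℝ) - 1 := by
        have : (1:ℕ) ≤ r := le_trans (by norm_num) hr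
        push_cast [this]
        ring
      rw [hrc] at hzero
      -- clear denominators
      have hE : a * s = a * u * ((r:ℝ) - 1) * u ^ (α - 1) + b * (r:ℝ) * u ^ (α - 1) := by
        field_simp at hzero
        linarith
      have hupow : u * u ^ (α - 1) = u ^ α := by
        have h4 := Real.rpow_add hu 1 (α - 1)
        rw [show (1:ℝ) + (α - 1) = α by ring, Real.rpow_one] at h4
        linarith
      have h3 : u * a * s = a * u * ((r:ℝ) - 1) * u ^ α + b * (r:ℝ) * u ^ α := by
        linear_combination u * hE + (a * u * ((r:ℝ) - 1) + b * (r:ℝ)) * hupow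
      linear_combination (-(1 - (r:ℝ) * u ^ α)) * hsplit - h3 + u * a * hs_def
  refine ⟨hkey, ?_⟩
  -- part 2
  have hspos : 0 < s ^ α⁻¹ := Real.rpow_pos_of_pos hs _
  set y' : V → ℝ := fun v => if v = k then 0 else x v * (s ^ α⁻¹)⁻¹ with hy'_def
  have hy'k : y' k = 0 := by simp [hy'_def]
  have hy'v : ∀ v, v ≠ k → y' v = x v * (s ^ α⁻¹)⁻¹ := by
    intro v hv; simp [hy'_def, hv]
  have hnorm' : ∑ v, |y' v| ^ α = 1 := by
    rw [← Finset.add_sum_erase Finset.univ (fun v => |y' v| ^ α) (Finset.mem_univ k)]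
    have h1 : |y' k| ^ α = 0 := by
      rw [hy'k, abs_zero, Real.zero_rpow hα0']
    have h2 : ∀ v ∈ Finset.univ.erase k, |y' v| ^ α = x v ^ α / s := by
      intro v hv
      rw [hy'v v (Finset.mem_erase.1 hv).1, abs_mul, abs_of_nonneg (hx v),
        abs_of_nonneg (by positivity), Real.mul_rpow (hx v) (by positivity),
        Real.inv_rpow (le_of_lt hspos), Real.rpow_inv_rpow hs.le hα0', div_eq_mul_inv]
    rw [h1, Finset.sum_congr rfl h2, ← Finset.sum_div, hsum']
    field_simp
    ring
  have hpow2 : ((s ^ α⁻¹) : ℝ) ^ (r : ℕ) = s ^ ((r:ℝ)/α) := by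
    rw [← Real.rpow_natCast (s ^ α⁻¹) r, ← Real.rpow_mul hs.le]
    congr 1
    rw [div_eq_mul_inv]
    ring
  have hval' : (r.factorial : ℝ) * ∑ e ∈ G.filter (fun e => k ∉ e), ∏ v ∈ e, y' v
      = b / s ^ ((r:ℝ)/α) := by
    have e2 : ∀ e ∈ G.filter (fun e => k ∉ e),
        ∏ v ∈ e, y' v = ((s ^ α⁻¹)⁻¹) ^ r * ∏ v ∈ e, x v := by
      intro e he
      obtain ⟨heG, hek⟩ := Finset.mem_filter.1 he
      have h3 : ∏ v ∈ e, y' v = ∏ v ∈ e, (x v * (s ^ α⁻¹)⁻¹) :=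
        Finset.prod_congr rfl (fun v hv => hy'v v (fun h => hek (h ▸ hv)))
      rw [h3, Finset.prod_mul_distrib, Finset.prod_const, hG e heG]
      ring
    rw [Finset.sum_congr rfl e2, ← Finset.mul_sum, ← hB_def, hb_def, inv_pow, hpow2]
    field_simp
  have hbdd' : BddAbove {p : ℝ | ∃ y : V → ℝ, y k = 0 ∧ ∑ v, |y v| ^ α = 1 ∧
      p = (r.factorial : ℝ) * ∑ e ∈ G.filter (fun e => k ∉ e), ∏ v ∈ e, y v} := by
    refine BddAbove.mono ?_ (deletion_bdd_aux r α hα0 (G.filter (fun e => k ∉ e)))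
    rintro p ⟨y, -, hn1, hp1⟩
    exact ⟨y, hn1, hp1⟩
  have hmem' : b / s ^ ((r:ℝ)/α) ∈ {p : ℝ | ∃ y : V → ℝ, y k = 0 ∧ ∑ v, |y v| ^ α = 1 ∧
      p = (r.factorial : ℝ) * ∑ e ∈ G.filter (fun e => k ∉ e), ∏ v ∈ e, y v} :=
    ⟨y', hy'k, hnorm', hval'.symm⟩
  calc lam * (1 - (r:ℝ) * u ^ α) / s ^ ((r:ℝ)/α) = b / s ^ ((r:ℝ)/α) := by rw [hkey]
    _ ≤ _ := le_csSup hbdd' hmem'
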